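/- If the PPDG sequence {(x^k, y^k)} is bounded, then the Lagrangian L is finite and takes a single constant value on the set C of cluster points of {(x^k, y^k)}; this constant equals the limit of the nonincreasing sequence 𝓛(z^k) = L(x^k,y^k) - a‖x^k - x^{k+1}‖² + b‖x^k - x^{k-1}‖². -/

import Mathlib

open RealInnerProductSpace Filter Topology

noncomputable section

lemma descent_lemma {X : Type*} [NormedAddCommGroup X] [InnerProductSpace ℝ X] [CompleteSpace X]
    (f : X → ℝ) (f' : X → X) (hf : ∀ p, HasGradientAt f (f' p) p)
    (Lf : ℝ) (hLf : 0 ≤ Lf) (hLip : ∀ p q, ‖f' p - f' q‖ ≤ Lf * ‖p - q‖)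
    (p q : X) : f q ≤ f p + ⟪f' p, q - p⟫ + Lf/2 * ‖q - p‖^2 := by
  set d := q - p with hd
  have hc : ∀ t : ℝ, HasDerivAt (fun s : ℝ => p + s • d) d t := by
    intro t
    simpa using ((hasDerivAt_id t).smul_const d).const_add p
  have hfd : ∀ t : ℝ, HasDerivAt (fun s => f (p + s • d)) ⟪f' (p + t • d), d⟫ t := by
    intro t
    have h1 := (hf (p + t • d)).hasFDerivAt.comp_hasDerivAt t (hc t)
    have h2 := h1; simp at h2; exact h2
  set g : ℝ → ℝ := fun t => f p + t * ⟪f' p, d⟫ + Lf/2 * t^2 * ‖d‖^2 - f (p + t • d) with hg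
  have hg' : ∀ t : ℝ, HasDerivAt g
      (⟪f' p, d⟫ + Lf/2 * (2*t) * ‖d‖^2 - ⟪f' (p + t • d), d⟫) t := by
    intro t
    have h1 : HasDerivAt (fun s : ℝ => f p + s * ⟪f' p, d⟫) ⟪f' p, d⟫ t := by
      simpa using (hasDerivAt_mul_const (⟪f' p, d⟫ : ℝ)).const_add (f p)
    have h2 : HasDerivAt (fun s : ℝ => Lf/2 * s^2 * ‖d‖^2) (Lf/2 * (2*t) * ‖d‖^2) t := by
      have := ((hasDerivAt_pow 2 t).const_mul (Lf/2)).mul_const (‖d‖^2)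
      simpa [mul_comm, mul_assoc, mul_left_comm] using this
    have h3 := (h1.add h2).sub (hfd t); exact h3
  have mono : MonotoneOn g (Set.Icc (0:ℝ) 1) := by
    apply monotoneOn_of_deriv_nonneg (convex_Icc 0 1)
    · exact fun t _ => ((hg' t).differentiableAt).continuousAt.continuousWithinAt
    · exact fun t _ => ((hg' t).differentiableAt).differentiableWithinAt
    · intro t ht
      rw [interior_Icc] at ht
      rw [(hg' t).deriv]
      have h1 : ‖f' p - f' (p + t • d)‖ ≤ Lf * (t * ‖d‖) := by
        have h := hLip p (p + t • d)
        have : p - (p + t • d) = -(t • d) := by abel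
        rw [this, norm_neg, norm_smul, Real.norm_eq_abs, abs_of_pos ht.1] at h
        linarith
      have h2 : -(‖f' p - f' (p + t • d)‖ * ‖d‖) ≤ ⟪f' p - f' (p + t • d), d⟫ := by
        have := abs_real_inner_le_norm (f' p - f' (p + t • d)) d
        have := neg_abs_le (⟪f' p - f' (p + t • d), d⟫ : ℝ)
        nlinarith [norm_nonneg d, norm_nonneg (f' p - f' (p + t • d))]
      have h3 : ⟪f' p - f' (p + t • d), d⟫ = ⟪f' p, d⟫ - ⟪f' (p + t • d), d⟫ :=
        inner_sub_left _ _ _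
      nlinarith [norm_nonneg d]
  have h01 : g 0 ≤ g 1 := mono (Set.mem_Icc.mpr ⟨le_refl 0, zero_le_one⟩)
    (Set.mem_Icc.mpr ⟨zero_le_one, le_refl 1⟩) zero_le_one
  have hg0 : g 0 = 0 := by simp [hg]
  have hg1 : g 1 = f p + ⟪f' p, d⟫ + Lf/2 * ‖d‖^2 - f q := by
    have h1 : p + (1:ℝ) • d = q := by rw [one_smul, hd]; abel
    simp only [hg]
    rw [h1]; ring
  rw [hg0, hg1] at h01
  linarith

lemma prox_strong {Y : Type*} [NormedAddCommGroup Y] [InnerProductSpace ℝ Y]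
    {Z : Type*} [NormedAddCommGroup Z] [InnerProductSpace ℝ Z]
    (φ : Y → ℝ) (hφ : ConvexOn ℝ Set.univ φ) (B : Y →L[ℝ] Z) (α : ℝ) (hα : 0 < α)
    (y0 y1 : Y) (hmin : ∀ z, φ y1 + α/2 * ‖B (y1 - y0)‖^2 ≤ φ z + α/2 * ‖B (z - y0)‖^2)
    (w : Y) : φ y1 ≤ φ w + α * ⟪B (y1 - y0), B (w - y1)⟫ := by
  have hC0 : 0 ≤ α/2 * ‖B (w - y1)‖^2 := by positivity
  have key : ∀ t : ℝ, 0 < t → t ≤ 1 →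
      φ y1 ≤ φ w + α * ⟪B (y1 - y0), B (w - y1)⟫ + t * (α/2 * ‖B (w - y1)‖^2) := by
    intro t ht0 ht1
    have hz := hmin (y1 + t • (w - y1))
    have hconvpt : φ (y1 + t • (w - y1)) ≤ (1 - t) * φ y1 + t * φ w := by
      have h := hφ.2 (Set.mem_univ y1) (Set.mem_univ w)
        (by linarith : (0:ℝ) ≤ 1 - t) ht0.le (by ring)
      have hpt : y1 + t • (w - y1) = (1-t) • y1 + t • w := by
        rw [smul_sub, sub_smul, one_smul]; abel
      rw [hpt]
      simpa [smul_eq_mul] using h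
    have hvec : B (y1 + t • (w - y1) - y0) = B (y1 - y0) + t • B (w - y1) := by
      have hv : y1 + t • (w - y1) - y0 = (y1 - y0) + t • (w - y1) := by abel
      rw [hv, map_add, map_smul]
    have hquad : ‖B (y1 + t • (w - y1) - y0)‖^2
        = ‖B (y1 - y0)‖^2 + 2*(t*⟪B (y1 - y0), B (w - y1)⟫) + t^2*‖B (w - y1)‖^2 := by
      rw [hvec, norm_add_sq_real, real_inner_smul_right, norm_smul, Real.norm_eq_abs,
        mul_pow, sq_abs]
    rw [hquad] at hz
    have ht' : t * φ y1 ≤ t * (φ w + α * ⟪B (y1 - y0), B (w - y1)⟫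
        + t * (α/2 * ‖B (w - y1)‖^2)) := by nlinarith [hz, hconvpt]
    exact (mul_le_mul_iff_right₀ ht0).mp ht'
  refine le_of_forall_pos_le_add ?_
  intro ε hε
  rcases le_or_gt (α/2 * ‖B (w - y1)‖^2) (ε/2) with h | h
  · have := key 1 one_pos le_rfl; linarith
  · set C := α/2 * ‖B (w - y1)‖^2 with hCdef
    have hCpos : 0 < C := by linarith [half_pos hε]
    have htpos : 0 < ε / (2*C) := by positivity
    have htle : ε / (2*C) ≤ 1 := by
      rw [div_le_one (by positivity)]; linarith
    have hk := key (ε/(2*C)) htpos htle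
    have heq : (ε/(2*C)) * C = ε/2 := by field_simp
    rw [heq] at hk
    linarith

lemma scalar_ineq (α δ Lf a b c U V W : ℝ) (hα : 0 < α) (hδ : 0 < δ)
    (hadef : a = δ / α)
    (hbdef : b = 1/(2*α) - Lf/4 - δ/α - α*δ*Lf^2/2 - δ*Lf + α*Lf^2/(4*δ))
    (hcdef : c = b - α*Lf^2/(2*δ)) :
    (Lf/2 - 1/α)*V^2 + Lf*U*W + (Lf + α*Lf^2)*(U*V)
      ≤ a*W^2 - (a+b+c)*V^2 + (b-c)*U^2 := by
  have key : a*W^2 - (a+b+c)*V^2 + (b-c)*U^2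
      - ((Lf/2 - 1/α)*V^2 + Lf*U*W + (Lf + α*Lf^2)*(U*V))
      = ((2*δ*W - α*Lf*U)^2 + (2*δ*(1+α*Lf)*V - α*Lf*U)^2)/(4*δ*α) := by
    subst hcdef; subst hbdef; subst hadef
    field_simp
    ring
  have hpos : 0 ≤ ((2*δ*W - α*Lf*U)^2 + (2*δ*(1+α*Lf)*V - α*Lf*U)^2)/(4*δ*α) := by positivity
  linarith

/-- The Lyapunov function `𝓛(x,y,u,v) = L(x,y) - a‖x-u‖² + b‖x-v‖²` where
`L(x,y) = f(x) + ⟪y, Ax⟫ - h*(y)` is the Lagrangian. -/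
def Lyap {X : Type*} [NormedAddCommGroup X] [InnerProductSpace ℝ X]
    {Y : Type*} [NormedAddCommGroup Y] [InnerProductSpace ℝ Y]
    (A : X →L[ℝ] Y) (f : X → ℝ) (hs : Y → ℝ) (a b : ℝ)
    (p : X) (q : Y) (u v : X) : ℝ :=
  (f p + ⟪q, A p⟫ - hs q) - a * ‖p - u‖^2 + b * ‖p - v‖^2

set_option maxHeartbeats 1600000 in
/-- if the PPDG sequence is bounded, the Lagrangian is constant on the set of
cluster points, with constant value the limit of the nonincreasing sequence `𝓛(z^k)`. -/
theorem stmt6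
    {X : Type*} [NormedAddCommGroup X] [InnerProductSpace ℝ X] [FiniteDimensional ℝ X]
    {Y : Type*} [NormedAddCommGroup Y] [InnerProductSpace ℝ Y] [FiniteDimensional ℝ Y]
    (A : X →L[ℝ] Y) (hA : Function.Surjective A)
    (f : X → ℝ) (f' : X → X) (hf : ∀ p, HasGradientAt f (f' p) p)
    (Lf : ℝ) (hLf : 0 < Lf) (hLip : ∀ p q, ‖f' p - f' q‖ ≤ Lf * ‖p - q‖)
    (hs : Y → ℝ) (hconv : ConvexOn ℝ Set.univ hs)
    (hbdd : ∀ w : Y, BddBelow (Set.range fun p : X => f p + ⟪w, A p⟫ - hs w))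
    (α : ℝ) (hα : 0 < α)
    (x : ℕ → X) (y : ℕ → Y)
    (hxiter : ∀ k : ℕ,
      x (k+1) = x k - α • (f' (x k) + (ContinuousLinearMap.adjoint A) (y k)))
    (hyiter : ∀ k : ℕ, ∀ w : Y,
      hs (y (k+1)) - ⟪y (k+1), A ((2:ℝ) • x (k+1) - x k)⟫
        + (1/2) * ⟪α • A ((ContinuousLinearMap.adjoint A) (y (k+1) - y k)), y (k+1) - y k⟫
      ≤ hs w - ⟪w, A ((2:ℝ) • x (k+1) - x k)⟫
        + (1/2) * ⟪α • A ((ContinuousLinearMap.adjoint A) (w - y k)), w - y k⟫)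
    (δ a b c : ℝ) (hδ : 0 < δ)
    (hadef : a = δ / α)
    (hbdef : b = 1/(2*α) - Lf/4 - δ/α - α*δ*Lf^2/2 - δ*Lf + α*Lf^2/(4*δ))
    (hcdef : c = b - α*Lf^2/(2*δ))
    (hapos : 0 < a) (hbpos : 0 < b) (hcpos : 0 < c)
    (hbound : ∃ R : ℝ, ∀ k : ℕ, ‖x k‖ ≤ R ∧ ‖y k‖ ≤ R) :
    (∀ k : ℕ, 1 ≤ k →
      Lyap A f hs a b (x (k+1)) (y (k+1)) (x (k+2)) (x k)
        ≤ Lyap A f hs a b (x k) (y k) (x (k+1)) (x (k-1)))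
    ∧ ∃ c0 : ℝ,
        (∀ p ∈ {p : X × Y | MapClusterPt p atTop (fun k : ℕ => (x k, y k))},
          f p.1 + ⟪p.2, A p.1⟫ - hs p.2 = c0)
        ∧ Tendsto (fun k : ℕ => Lyap A f hs a b (x k) (y k) (x (k+1)) (x (k-1)))
            atTop (nhds c0) := by
  classical
  set B := ContinuousLinearMap.adjoint A with hBdef
  have hadj : ∀ (z : Y) (t : X), ⟪B z, t⟫ = ⟪z, A t⟫ := by
    intro z t; rw [hBdef]; exact ContinuousLinearMap.adjoint_inner_left A t z
  have hxid : ∀ k : ℕ, α • (f' (x k) + B (y k)) = x k - x (k+1) := by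
    intro k; rw [hxiter k]; exact (sub_sub_cancel _ _).symm
  have hBy : ∀ k : ℕ, α • (B (y k)) = (x k - x (k+1)) - α • f' (x k) := by
    intro k
    have h := hxid k
    rw [smul_add] at h
    rw [← h]; abel
  -- the key decrease inequality
  have key : ∀ j : ℕ,
      Lyap A f hs a b (x (j+2)) (y (j+2)) (x (j+3)) (x (j+1))
        ≤ Lyap A f hs a b (x (j+1)) (y (j+1)) (x (j+2)) (x j)
          - c * ‖x (j+1) - x (j+2)‖^2 - c * ‖x j - x (j+1)‖^2 := by
    intro j
    -- vector identities
    have hQid : α • (B (y (j+1) - y j))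
        = (x (j+1) - x (j+2)) - (x j - x (j+1)) - α • (f' (x (j+1)) - f' (x j)) := by
      rw [map_sub, smul_sub, hBy (j+1), hBy j, smul_sub]
      abel
    have hPid : α • (B (y (j+2) - y (j+1)))
        = (x (j+2) - x (j+3)) - (x (j+1) - x (j+2)) - α • (f' (x (j+2)) - f' (x (j+1))) := by
      rw [map_sub, smul_sub, hBy (j+2), hBy (j+1), smul_sub]
      abel
    have hg1 : f' (x (j+1)) = α⁻¹ • (x (j+1) - x (j+2)) - B (y (j+1)) := by
      have h := hxid (j+1)
      have h2 : f' (x (j+1)) + B (y (j+1)) = α⁻¹ • (x (j+1) - x (j+2)) := by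
        rw [← h, smul_smul, inv_mul_cancel₀ hα.ne', one_smul]
      rw [← h2]; abel
    have hinner1 : ⟪f' (x (j+1)), x (j+2) - x (j+1)⟫
        = -(1/α * ‖x (j+1) - x (j+2)‖^2) + ⟪y (j+1), A (x (j+1) - x (j+2))⟫ := by
      have hx21 : x (j+2) - x (j+1) = -(x (j+1) - x (j+2)) := by abel
      rw [hx21, hg1, inner_neg_right, inner_sub_left, real_inner_smul_left,
        real_inner_self_eq_norm_sq, hadj]
      ring
    -- descent lemma
    have hdesc := descent_lemma f f' hf Lf hLf.le hLip (x (j+1)) (x (j+2))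
    rw [hinner1, norm_sub_rev (x (j+2)) (x (j+1))] at hdesc
    -- prox step inequality
    have hnormq : ∀ e : Y, ⟪α • A (B e), e⟫ = α * ‖B e‖^2 := by
      intro e
      rw [real_inner_smul_left, real_inner_comm, ← hadj e (B e),
        real_inner_self_eq_norm_sq]
    have hφconv : ConvexOn ℝ Set.univ
        (fun z : Y => hs z - ⟪z, A ((2:ℝ) • x (j+1) - x j)⟫) := by
      refine ⟨convex_univ, fun p _ q _ s t hs0 ht0 hst => ?_⟩
      have h1 := hconv.2 (Set.mem_univ p) (Set.mem_univ q) hs0 ht0 hst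
      simp only [smul_eq_mul] at h1 ⊢
      have h2 : ⟪s • p + t • q, A ((2:ℝ) • x (j+1) - x j)⟫
          = s * ⟪p, A ((2:ℝ) • x (j+1) - x j)⟫ + t * ⟪q, A ((2:ℝ) • x (j+1) - x j)⟫ := by
        rw [inner_add_left, real_inner_smul_left, real_inner_smul_left]
      linarith [h1, h2]
    have hmin : ∀ z : Y, (fun z : Y => hs z - ⟪z, A ((2:ℝ) • x (j+1) - x j)⟫) (y (j+1))
        + α/2 * ‖B (y (j+1) - y j)‖^2
        ≤ (fun z : Y => hs z - ⟪z, A ((2:ℝ) • x (j+1) - x j)⟫) z + α/2 * ‖B (z - y j)‖^2 := by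
      intro z
      have h := hyiter j z
      rw [hnormq (y (j+1) - y j), hnormq (z - y j)] at h
      simp only []
      linarith [h]
    have hprox := prox_strong _ hφconv B α hα (y j) (y (j+1)) hmin (y (j+2))
    beta_reduce at hprox
    -- linear algebra identities
    have hF4 : ⟪y (j+2), A (x (j+2))⟫ - ⟪y (j+1), A (x (j+1))⟫
        = ⟪y (j+2) - y (j+1), A (x (j+2))⟫ - ⟪y (j+1), A (x (j+1) - x (j+2))⟫ := by
      rw [inner_sub_left, map_sub, inner_sub_right]; ring
    have hF45 : ⟪y (j+2) - y (j+1), A ((2:ℝ) • x (j+1) - x j)⟫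
        = ⟪y (j+2), A ((2:ℝ) • x (j+1) - x j)⟫ - ⟪y (j+1), A ((2:ℝ) • x (j+1) - x j)⟫ :=
      inner_sub_left _ _ _
    have hF5 : ⟪y (j+2) - y (j+1), A (x (j+2))⟫
        - ⟪y (j+2) - y (j+1), A ((2:ℝ) • x (j+1) - x j)⟫
        = ⟪B (y (j+2) - y (j+1)), (x j - x (j+1)) - (x (j+1) - x (j+2))⟫ := by
      rw [← inner_sub_right, ← map_sub, hadj]
      congr 2
      rw [two_smul]
      abel
    have hF6 : ⟪B (y (j+2) - y (j+1)), (x j - x (j+1)) - (x (j+1) - x (j+2))⟫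
        + α * ⟪B (y (j+1) - y j), B (y (j+2) - y (j+1))⟫
        = -⟪f' (x (j+1)) - f' (x j), x (j+2) - x (j+3)⟫
          + ⟪f' (x (j+1)) - f' (x j), x (j+1) - x (j+2)⟫
          + α * ⟪f' (x (j+1)) - f' (x j), f' (x (j+2)) - f' (x (j+1))⟫ := by
      have h1 : α * ⟪B (y (j+1) - y j), B (y (j+2) - y (j+1))⟫
          = ⟪(x (j+1) - x (j+2)) - (x j - x (j+1)) - α • (f' (x (j+1)) - f' (x j)),
              B (y (j+2) - y (j+1))⟫ := by
        rw [← hQid, real_inner_smul_left]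
      have h2 : ⟪f' (x (j+1)) - f' (x j), α • (B (y (j+2) - y (j+1)))⟫
          = ⟪f' (x (j+1)) - f' (x j),
              (x (j+2) - x (j+3)) - (x (j+1) - x (j+2)) - α • (f' (x (j+2)) - f' (x (j+1)))⟫ := by
        rw [hPid]
      simp only [inner_sub_left, inner_sub_right, real_inner_smul_left,
        real_inner_smul_right] at h1 h2 ⊢
      have c1 : ⟪x j, B (y (j+2) - y (j+1))⟫ = ⟪B (y (j+2) - y (j+1)), x j⟫ :=
        real_inner_comm _ _
      have c2 : ⟪x (j+1), B (y (j+2) - y (j+1))⟫ = ⟪B (y (j+2) - y (j+1)), x (j+1)⟫ :=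
        real_inner_comm _ _
      have c3 : ⟪x (j+2), B (y (j+2) - y (j+1))⟫ = ⟪B (y (j+2) - y (j+1)), x (j+2)⟫ :=
        real_inner_comm _ _
      linarith [h1, h2, c1, c2, c3]
    -- Cauchy-Schwarz + Lipschitz bounds
    have hΓn : ‖f' (x (j+1)) - f' (x j)‖ ≤ Lf * ‖x j - x (j+1)‖ := by
      have h := hLip (x (j+1)) (x j)
      rwa [norm_sub_rev (x (j+1)) (x j)] at h
    have hΓ'n : ‖f' (x (j+2)) - f' (x (j+1))‖ ≤ Lf * ‖x (j+1) - x (j+2)‖ := by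
      have h := hLip (x (j+2)) (x (j+1))
      rwa [norm_sub_rev (x (j+2)) (x (j+1))] at h
    have cb1 : -⟪f' (x (j+1)) - f' (x j), x (j+2) - x (j+3)⟫
        ≤ Lf * ‖x j - x (j+1)‖ * ‖x (j+2) - x (j+3)‖ := by
      have h2 := mul_le_mul_of_nonneg_right hΓn (norm_nonneg (x (j+2) - x (j+3)))
      linarith [abs_real_inner_le_norm (f' (x (j+1)) - f' (x j)) (x (j+2) - x (j+3)),
        neg_abs_le (⟪f' (x (j+1)) - f' (x j), x (j+2) - x (j+3)⟫ : ℝ)]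
    have cb2 : ⟪f' (x (j+1)) - f' (x j), x (j+1) - x (j+2)⟫
        ≤ Lf * ‖x j - x (j+1)‖ * ‖x (j+1) - x (j+2)‖ := by
      have h2 := mul_le_mul_of_nonneg_right hΓn (norm_nonneg (x (j+1) - x (j+2)))
      linarith [abs_real_inner_le_norm (f' (x (j+1)) - f' (x j)) (x (j+1) - x (j+2)),
        le_abs_self (⟪f' (x (j+1)) - f' (x j), x (j+1) - x (j+2)⟫ : ℝ)]
    have cb3 : α * ⟪f' (x (j+1)) - f' (x j), f' (x (j+2)) - f' (x (j+1))⟫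
        ≤ α * (Lf * ‖x j - x (j+1)‖ * (Lf * ‖x (j+1) - x (j+2)‖)) := by
      have h1 : ⟪f' (x (j+1)) - f' (x j), f' (x (j+2)) - f' (x (j+1))⟫
          ≤ Lf * ‖x j - x (j+1)‖ * (Lf * ‖x (j+1) - x (j+2)‖) := by
        have h2 := real_inner_le_norm (f' (x (j+1)) - f' (x j)) (f' (x (j+2)) - f' (x (j+1)))
        have h3 : ‖f' (x (j+1)) - f' (x j)‖ * ‖f' (x (j+2)) - f' (x (j+1))‖
            ≤ Lf * ‖x j - x (j+1)‖ * (Lf * ‖x (j+1) - x (j+2)‖) :=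
          mul_le_mul hΓn hΓ'n (norm_nonneg _) (by positivity)
        linarith
      exact mul_le_mul_of_nonneg_left h1 hα.le
    have SI := scalar_ineq α δ Lf a b c (‖x j - x (j+1)‖) (‖x (j+1) - x (j+2)‖)
      (‖x (j+2) - x (j+3)‖) hα hδ hadef hbdef hcdef
    simp only [Lyap]
    rw [norm_sub_rev (x (j+2)) (x (j+1)), norm_sub_rev (x (j+1)) (x j)]
    linarith [hdesc, hprox, hF4, hF45, hF5, hF6, cb1, cb2, cb3, SI]
  -- the Lyapunov sequence
  set S : ℕ → ℝ := fun k => Lyap A f hs a b (x k) (y k) (x (k+1)) (x (k-1)) with hS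
  have hSeq0 : ∀ k : ℕ, S k = (f (x k) + ⟪y k, A (x k)⟫ - hs (y k))
      - a * ‖x k - x (k+1)‖^2 + b * ‖x k - x (k-1)‖^2 := by
    intro k; simp only [hS, Lyap]
  have hkey2 : ∀ n : ℕ, S (n+2) ≤ S (n+1) - c * ‖x (n+1) - x (n+2)‖^2
      - c * ‖x n - x (n+1)‖^2 := by
    intro n
    simp only [hS]
    show Lyap A f hs a b (x (n+2)) (y (n+2)) (x (n+3)) (x (n+1))
      ≤ Lyap A f hs a b (x (n+1)) (y (n+1)) (x (n+2)) (x n) - _ - _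
    exact key n
  have hT : ∀ n : ℕ, S (n+2) ≤ S (n+1) := by
    intro n
    have h1 : 0 ≤ c * ‖x (n+1) - x (n+2)‖^2 := by positivity
    have h2 : 0 ≤ c * ‖x n - x (n+1)‖^2 := by positivity
    linarith [hkey2 n]
  have hanti : Antitone (fun n : ℕ => S (n+1)) := by
    apply antitone_nat_of_succ_le
    intro n
    exact hT n
  -- continuity facts
  have hfc : Continuous f := continuous_iff_continuousAt.mpr
    fun p => ((hf p).differentiableAt).continuousAt
  have hsc : Continuous hs := by
    have h := hconv.continuousOn isOpen_univ
    rwa [continuousOn_univ] at h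
  have hgc : Continuous (fun z : X × Y => f z.1 + ⟪z.2, A z.1⟫ - hs z.2) :=
    ((hfc.comp continuous_fst).add
      (continuous_snd.inner (A.continuous.comp continuous_fst))).sub
      (hsc.comp continuous_snd)
  -- bounded below
  obtain ⟨R, hR⟩ := hbound
  have hK : IsCompact ((Metric.closedBall (0:X) R) ×ˢ (Metric.closedBall (0:Y) R)) :=
    (isCompact_closedBall _ _).prod (isCompact_closedBall _ _)
  have hKne : ((Metric.closedBall (0:X) R) ×ˢ (Metric.closedBall (0:Y) R)).Nonempty :=
    ⟨(x 0, y 0), Set.mk_mem_prod (mem_closedBall_zero_iff.mpr (hR 0).1)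
      (mem_closedBall_zero_iff.mpr (hR 0).2)⟩
  obtain ⟨zmin, _, hmin'⟩ := hK.exists_isMinOn hKne hgc.continuousOn
  have hmin : ∀ z ∈ (Metric.closedBall (0:X) R) ×ˢ (Metric.closedBall (0:Y) R),
      (f zmin.1 + ⟪zmin.2, A zmin.1⟫ - hs zmin.2) ≤ f z.1 + ⟪z.2, A z.1⟫ - hs z.2 :=
    fun z hz => hmin' hz
  have hSlb : ∀ n : ℕ, (f zmin.1 + ⟪zmin.2, A zmin.1⟫ - hs zmin.2) - a*(2*R)^2 ≤ S (n+1) := by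
    intro n
    have hmem : (x (n+1), y (n+1)) ∈ (Metric.closedBall (0:X) R) ×ˢ (Metric.closedBall (0:Y) R) :=
      Set.mk_mem_prod (mem_closedBall_zero_iff.mpr (hR (n+1)).1)
        (mem_closedBall_zero_iff.mpr (hR (n+1)).2)
    have h1 : (f zmin.1 + ⟪zmin.2, A zmin.1⟫ - hs zmin.2)
        ≤ f (x (n+1)) + ⟪y (n+1), A (x (n+1))⟫ - hs (y (n+1)) := hmin _ hmem
    have h2 : ‖x (n+1) - x (n+2)‖ ≤ 2*R :=
      le_trans (norm_sub_le _ _) (by linarith [(hR (n+1)).1, (hR (n+2)).1])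
    have h3 : ‖x (n+1) - x (n+2)‖^2 ≤ (2*R)^2 := by nlinarith [norm_nonneg (x (n+1) - x (n+2))]
    have h4 : a * ‖x (n+1) - x (n+2)‖^2 ≤ a * (2*R)^2 := mul_le_mul_of_nonneg_left h3 hapos.le
    have h5 : 0 ≤ b * ‖x (n+1) - x n‖^2 := by positivity
    have h6 := hSeq0 (n+1)
    rw [show (n+1) - 1 = n from rfl] at h6
    rw [h6]
    linarith
  have hbdd2 : BddBelow (Set.range fun n : ℕ => S (n+1)) := by
    refine ⟨(f zmin.1 + ⟪zmin.2, A zmin.1⟫ - hs zmin.2) - a*(2*R)^2, ?_⟩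
    rintro _ ⟨n, rfl⟩
    exact hSlb n
  have hconv2 : Tendsto (fun n : ℕ => S (n+1)) atTop (𝓝 (⨅ n : ℕ, S (n+1))) :=
    tendsto_atTop_ciInf hanti hbdd2
  set c0 : ℝ := ⨅ n : ℕ, S (n+1) with hc0
  have hStend : Tendsto S atTop (𝓝 c0) := (tendsto_add_atTop_iff_nat 1).mp hconv2
  -- vanishing of successive differences
  have hshift : Tendsto (fun n : ℕ => S (n+2)) atTop (𝓝 c0) := by
    have h := hconv2.comp (tendsto_add_atTop_nat 1)
    exact h
  have hdiff : Tendsto (fun n : ℕ => S (n+1) - S (n+2)) atTop (𝓝 0) := by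
    have h := hconv2.sub hshift
    rwa [sub_self] at h
  have h1 : Tendsto (fun n : ℕ => c * ‖x n - x (n+1)‖^2) atTop (𝓝 0) := by
    apply squeeze_zero (fun n => by positivity) (fun n => ?_) hdiff
    have h2 : 0 ≤ c * ‖x (n+1) - x (n+2)‖^2 := by positivity
    linarith [hkey2 n]
  have hd2 : Tendsto (fun n : ℕ => ‖x n - x (n+1)‖^2) atTop (𝓝 0) := by
    have h2 := h1.const_mul c⁻¹
    rw [mul_zero] at h2
    have h3 : (fun n : ℕ => c⁻¹ * (c * ‖x n - x (n+1)‖^2))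
        = fun n : ℕ => ‖x n - x (n+1)‖^2 := by
      funext n
      rw [← mul_assoc, inv_mul_cancel₀ hcpos.ne', one_mul]
    rwa [h3] at h2
  have h3 : Tendsto (fun k : ℕ => ‖x k - x (k-1)‖^2) atTop (𝓝 0) := by
    apply (tendsto_add_atTop_iff_nat 1).mp
    show Tendsto (fun n : ℕ => ‖x (n+1) - x (n+1-1)‖^2) atTop (𝓝 0)
    have h4 : (fun n : ℕ => ‖x (n+1) - x (n+1-1)‖^2) = fun n : ℕ => ‖x n - x (n+1)‖^2 := by
      funext n
      rw [show (n+1) - 1 = n from rfl, norm_sub_rev]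
    rw [h4]
    exact hd2
  -- the Lagrangian along the sequence tends to c0
  have hGt : Tendsto (fun k : ℕ => f (x k) + ⟪y k, A (x k)⟫ - hs (y k)) atTop (𝓝 c0) := by
    have hGfun : (fun k : ℕ => f (x k) + ⟪y k, A (x k)⟫ - hs (y k))
        = fun k : ℕ => S k + a * ‖x k - x (k+1)‖^2 - b * ‖x k - x (k-1)‖^2 := by
      funext k
      rw [hSeq0 k]
      ring
    rw [hGfun]
    have h := (hStend.add (hd2.const_mul a)).sub (h3.const_mul b)
    simpa using h
  constructor
  · -- part 1: monotonicity
    intro k hk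
    obtain ⟨j, rfl⟩ : ∃ j : ℕ, k = j + 1 := ⟨k - 1, (Nat.succ_pred_eq_of_pos hk).symm⟩
    have h := key j
    have h1 : 0 ≤ c * ‖x (j+1) - x (j+2)‖^2 := by positivity
    have h2 : 0 ≤ c * ‖x j - x (j+1)‖^2 := by positivity
    show Lyap A f hs a b (x (j+2)) (y (j+2)) (x (j+3)) (x (j+1))
      ≤ Lyap A f hs a b (x (j+1)) (y (j+1)) (x (j+2)) (x j)
    linarith
  · -- part 2: constancy on cluster points
    refine ⟨c0, fun p hp => ?_, hStend⟩
    have h1 : MapClusterPt (f p.1 + ⟪p.2, A p.1⟫ - hs p.2) atTop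
        ((fun z : X × Y => f z.1 + ⟪z.2, A z.1⟫ - hs z.2) ∘ (fun k : ℕ => (x k, y k))) :=
      MapClusterPt.continuousAt_comp hgc.continuousAt hp
    have h2 : Tendsto ((fun z : X × Y => f z.1 + ⟪z.2, A z.1⟫ - hs z.2)
        ∘ (fun k : ℕ => (x k, y k))) atTop (𝓝 c0) := hGt
    exact eq_of_nhds_neBot (h1.clusterPt.mono h2)
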